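/- Let F and F* be finite sets with |F| = |F*| = k ≥ 1 and let η : F* → F be any function. Then there exists a set S ⊆ F × F* of exactly k pairs such that: (i) each f* ∈ F* appears in exactly one pair of S; (ii) each r ∈ F appears in at most two pairs of S; and (iii) for every pair (r, f*) ∈ S, η^{-1}(r) ⊆ {f*} (in particular, no element of F with two or more η-preimages appears in any pair). -/

import Mathlib

open Finset

/-- Existence of the set of test swaps: given finite sets `F`, `F*` with
`|F| = |F*| = k ≥ 1` and a map `η : F* → F`, there is a set `S ⊆ F × F*` of
exactly `k` pairs such that each `f* ∈ F*` appears in exactly one pair, each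
`r ∈ F` appears in at most two pairs, and every pair `(r, f*) ∈ S` satisfies
`η⁻¹(r) ⊆ {f*}`. -/
lemma assign_lemma {α β : Type*} [DecidableEq α] [DecidableEq β] [Nonempty α] :
    ∀ (n : ℕ) (s : Finset β) (t : Finset α), s.card ≤ n → s.card ≤ 2 * t.card →
    ∃ f : β → α, (∀ x ∈ s, f x ∈ t) ∧ ∀ r, (s.filter (fun x => f x = r)).card ≤ 2 := by
  intro n
  induction n with
  | zero =>
    intro s t hs _
    have : s = ∅ := card_eq_zero.mp (Nat.le_zero.mp hs)
    subst this
    exact ⟨fun _ => Classical.arbitrary α, by simp, by simp⟩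
  | succ n ih =>
    intro s t hs hst
    rcases s.eq_empty_or_nonempty with rfl | hne
    · exact ⟨fun _ => Classical.arbitrary α, by simp, by simp⟩
    · have hs1 : 1 ≤ s.card := card_pos.mpr hne
      have ht1 : 1 ≤ t.card := by omega
      obtain ⟨a, ha⟩ := card_pos.mp (by omega : 0 < t.card)
      obtain ⟨rem, hrem_sub, hrem_card⟩ := s.exists_subset_card_eq (min_le_right 2 s.card)
      set s' := s \ rem with hs'def
      have hs'card : s'.card = s.card - min 2 s.card := by
        rw [hs'def, card_sdiff_of_subset hrem_sub, hrem_card]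
      have hmincase : min 2 s.card = 2 ∨ (min 2 s.card = s.card ∧ s.card ≤ 2) := by
        rcases le_total 2 s.card with h | h
        · exact Or.inl (min_eq_left h)
        · exact Or.inr ⟨min_eq_right h, h⟩
      have h1 : s'.card ≤ n := by rcases hmincase with h | ⟨h, h'⟩ <;> omega
      have h2 : s'.card ≤ 2 * (t.erase a).card := by
        rw [card_erase_of_mem ha]
        rcases hmincase with h | ⟨h, h'⟩ <;> omega
      obtain ⟨f', hf'1, hf'2⟩ := ih s' (t.erase a) h1 h2
      refine ⟨fun x => if x ∈ rem then a else f' x, ?_, ?_⟩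
      · intro x hx
        by_cases hxr : x ∈ rem
        · simp [hxr, ha]
        · simp only [hxr, if_neg, if_false]
          exact mem_of_mem_erase (hf'1 x (mem_sdiff.mpr ⟨hx, hxr⟩))
      · intro r
        by_cases hra : r = a
        · have hsub : s.filter (fun x => (if x ∈ rem then a else f' x) = r) ⊆ rem := by
            intro x hx
            simp only [mem_filter] at hx
            by_cases hxr : x ∈ rem
            · exact hxr
            · exfalso
              have hx' : x ∈ s' := mem_sdiff.mpr ⟨hx.1, hxr⟩
              have hmem := hf'1 x hx'
              rw [if_neg hxr] at hx
              rw [hx.2, hra] at hmem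
              exact (notMem_erase a t) hmem
          have h2' : rem.card ≤ 2 := hrem_card ▸ min_le_left _ _
          exact le_trans (card_le_card hsub) h2'
        · have hsub : s.filter (fun x => (if x ∈ rem then a else f' x) = r) ⊆
              s'.filter (fun x => f' x = r) := by
            intro x hx
            simp only [mem_filter] at hx
            by_cases hxr : x ∈ rem
            · rw [if_pos hxr] at hx; exact absurd hx.2.symm hra
            · rw [if_neg hxr] at hx
              exact mem_filter.mpr ⟨mem_sdiff.mpr ⟨hx.1, hxr⟩, hx.2⟩
          exact le_trans (card_le_card hsub) (hf'2 r)

theorem test_swaps_exist {α β : Type*} [DecidableEq α] [DecidableEq β]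
    (k : ℕ) (hk : 1 ≤ k) (F : Finset α) (Fstar : Finset β) (η : β → α)
    (hcardF : F.card = k) (hcardFstar : Fstar.card = k)
    (hη : ∀ g ∈ Fstar, η g ∈ F) :
    ∃ S : Finset (α × β),
      S ⊆ F ×ˢ Fstar ∧
      S.card = k ∧
      (∀ fstar ∈ Fstar, (S.filter (fun p => p.2 = fstar)).card = 1) ∧
      (∀ r ∈ F, (S.filter (fun p => p.1 = r)).card ≤ 2) ∧
      (∀ p ∈ S, ∀ g ∈ Fstar, η g = p.1 → g = p.2) := by
  classical
  obtain ⟨r0, hr0⟩ := card_pos.mp (by omega : 0 < F.card)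
  haveI : Nonempty α := ⟨r0⟩
  set c : α → ℕ := fun r => (Fstar.filter (fun g => η g = r)).card with hc_def
  -- fibers of elements of Fstar are nonempty
  have hcpos : ∀ g ∈ Fstar, 1 ≤ c (η g) := by
    intro g hg
    exact card_pos.mpr ⟨g, mem_filter.mpr ⟨hg, rfl⟩⟩
  set Z : Finset α := F.filter (fun r => c r = 0) with hZ_def
  set R1 : Finset α := F.filter (fun r => c r = 1) with hR1_def
  set B : Finset α := F.filter (fun r => 2 ≤ c r) with hB_def
  set G1 : Finset β := Fstar.filter (fun g => c (η g) = 1) with hG1_def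
  set G2 : Finset β := Fstar.filter (fun g => ¬ c (η g) = 1) with hG2_def
  -- total sum of fibers
  have hsum : ∑ r ∈ F, c r = k := by
    rw [← Finset.card_eq_sum_card_fiberwise hη, hcardFstar]
  -- sum over F splits
  have hsplit1 : ∑ r ∈ F, c r = R1.card + ∑ r ∈ B, c r := by
    rw [← Finset.sum_filter_add_sum_filter_not F (fun r => c r = 1)]
    congr 1
    · rw [← hR1_def, Finset.card_eq_sum_ones R1]
      exact Finset.sum_congr rfl (fun r hr => ((mem_filter.mp hr).2).symm ▸ rfl)
    · rw [← Finset.sum_filter_add_sum_filter_not (F.filter (fun r => ¬ c r = 1))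
        (fun r => c r = 0)]
      have e1 : (F.filter (fun r => ¬ c r = 1)).filter (fun r => c r = 0) =
          F.filter (fun r => c r = 0) := by
        ext r; simp only [mem_filter]; constructor
        · rintro ⟨⟨h1, _⟩, h3⟩; exact ⟨h1, h3⟩
        · rintro ⟨h1, h2⟩; exact ⟨⟨h1, by omega⟩, h2⟩
      have e2 : (F.filter (fun r => ¬ c r = 1)).filter (fun r => ¬ c r = 0) = B := by
        ext r; simp only [hB_def, mem_filter]; constructor
        · rintro ⟨⟨h1, h2⟩, h3⟩; exact ⟨h1, by omega⟩
        · rintro ⟨h1, h2⟩; exact ⟨⟨h1, by omega⟩, by omega⟩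
      rw [e1, e2]
      have : ∑ r ∈ F.filter (fun r => c r = 0), c r = 0 :=
        Finset.sum_eq_zero (fun r hr => (mem_filter.mp hr).2)
      rw [this, zero_add]
  -- card of F splits
  have hcardsplit : R1.card + Z.card + B.card = k := by
    have h1 : R1.card + (F.filter (fun r => ¬ c r = 1)).card = k := by
      rw [hR1_def, Finset.card_filter_add_card_filter_not, hcardF]
    have h2 : Z.card + B.card = (F.filter (fun r => ¬ c r = 1)).card := by
      have e1 : (F.filter (fun r => ¬ c r = 1)).filter (fun r => c r = 0) = Z := by
        ext r; simp only [hZ_def, mem_filter]; constructor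
        · rintro ⟨⟨h1, _⟩, h3⟩; exact ⟨h1, h3⟩
        · rintro ⟨h1, h2⟩; exact ⟨⟨h1, by omega⟩, h2⟩
      have e2 : (F.filter (fun r => ¬ c r = 1)).filter (fun r => ¬ c r = 0) = B := by
        ext r; simp only [hB_def, mem_filter]; constructor
        · rintro ⟨⟨h1, h2⟩, h3⟩; exact ⟨h1, by omega⟩
        · rintro ⟨h1, h2⟩; exact ⟨⟨h1, by omega⟩, by omega⟩
      rw [← e1, ← e2, Finset.card_filter_add_card_filter_not]
    omega
  -- G2 card equals sum over B
  have hG2card : G2.card = ∑ r ∈ B, c r := by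
    have hmap : ∀ g ∈ G2, η g ∈ B := by
      intro g hg
      obtain ⟨hg1, hg2⟩ := mem_filter.mp hg
      exact mem_filter.mpr ⟨hη g hg1, by have := hcpos g hg1; omega⟩
    rw [Finset.card_eq_sum_card_fiberwise hmap]
    refine Finset.sum_congr rfl (fun r hr => ?_)
    congr 1
    ext g
    simp only [hG2_def, mem_filter, and_assoc]
    constructor
    · rintro ⟨h1, _, h3⟩; exact ⟨h1, h3⟩
    · rintro ⟨h1, h2⟩
      have hr2 := (mem_filter.mp hr).2
      rw [h2] at *
      exact ⟨h1, by omega, rfl⟩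
  -- each B fiber has ≥ 2 elements
  have hBsum : 2 * B.card ≤ ∑ r ∈ B, c r := by
    calc 2 * B.card = B.card * 2 := by ring
    _ ≤ ∑ r ∈ B, c r := by
        rw [← smul_eq_mul]
        exact Finset.card_nsmul_le_sum B c 2 (fun r hr => (mem_filter.mp hr).2)
  -- key inequality
  have hkey : G2.card ≤ 2 * Z.card := by omega
  -- get the assignment for G2 into Z
  obtain ⟨f0, hf0mem, hf0fib⟩ := assign_lemma G2.card G2 Z le_rfl hkey
  set φ : β → α := fun g => if c (η g) = 1 then η g else f0 g with hφ_def
  have hφF : ∀ g ∈ Fstar, φ g ∈ F := by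
    intro g hg
    simp only [hφ_def]
    split
    · exact hη g hg
    · next h =>
      exact (mem_filter.mp (hf0mem g (mem_filter.mpr ⟨hg, h⟩))).1
  have hf0Z : ∀ g ∈ Fstar, ¬ c (η g) = 1 → c (f0 g) = 0 := by
    intro g hg h
    exact (mem_filter.mp (hf0mem g (mem_filter.mpr ⟨hg, h⟩))).2
  refine ⟨Fstar.image (fun g => (φ g, g)), ?_, ?_, ?_, ?_, ?_⟩
  · intro p hp
    obtain ⟨g, hg, rfl⟩ := mem_image.mp hp
    exact mem_product.mpr ⟨hφF g hg, hg⟩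
  · rw [Finset.card_image_of_injOn (fun x _ y _ h => congrArg Prod.snd h), hcardFstar]
  · intro fstar hf
    rw [Finset.filter_image]
    have : Fstar.filter (fun g => ((φ g, g) : α × β).2 = fstar) = {fstar} := by
      ext g
      simp only [mem_filter, mem_singleton]
      exact ⟨fun h => h.2, fun h => ⟨h ▸ hf, h⟩⟩
    rw [this, Finset.image_singleton, Finset.card_singleton]
  · intro r hr
    rw [Finset.filter_image]
    refine le_trans (Finset.card_image_le) ?_
    by_cases hcr : c r = 1
    · have hsub : Fstar.filter (fun g => ((φ g, g) : α × β).1 = r) ⊆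
          Fstar.filter (fun g => η g = r) := by
        intro g hg
        obtain ⟨hg1, hg2⟩ := mem_filter.mp hg
        simp only [hφ_def] at hg2
        by_cases h : c (η g) = 1
        · rw [if_pos h] at hg2; exact mem_filter.mpr ⟨hg1, hg2⟩
        · rw [if_neg h] at hg2
          have := hf0Z g hg1 h
          rw [hg2] at this
          omega
      calc _ ≤ (Fstar.filter (fun g => η g = r)).card := card_le_card hsub
        _ = c r := rfl
        _ ≤ 2 := by omega
    · have hsub : Fstar.filter (fun g => ((φ g, g) : α × β).1 = r) ⊆
          G2.filter (fun g => f0 g = r) := by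
        intro g hg
        obtain ⟨hg1, hg2⟩ := mem_filter.mp hg
        simp only [hφ_def] at hg2
        by_cases h : c (η g) = 1
        · rw [if_pos h] at hg2; rw [hg2] at h; exact absurd h hcr
        · rw [if_neg h] at hg2
          exact mem_filter.mpr ⟨mem_filter.mpr ⟨hg1, h⟩, hg2⟩
      exact le_trans (card_le_card hsub) (hf0fib r)
  · intro p hp g hg hηg
    obtain ⟨g0, hg0, rfl⟩ := mem_image.mp hp
    simp only at hηg ⊢
    by_cases h : c (η g0) = 1
    · have hφg0 : φ g0 = η g0 := by simp [hφ_def, h]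
      rw [hφg0] at hηg
      have hcard : (Fstar.filter (fun x => η x = η g0)).card ≤ 1 := by
        change c (η g0) ≤ 1 at *; omega
      exact Finset.card_le_one.mp hcard g (mem_filter.mpr ⟨hg, hηg⟩)
        g0 (mem_filter.mpr ⟨hg0, rfl⟩)
    · exfalso
      have hφg0 : φ g0 = f0 g0 := by simp [hφ_def, h]
      rw [hφg0] at hηg
      have h0 : c (f0 g0) = 0 := hf0Z g0 hg0 h
      have : g ∈ Fstar.filter (fun x => η x = f0 g0) := mem_filter.mpr ⟨hg, hηg⟩
      have := card_pos.mpr ⟨g, this⟩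
      change 0 < c (f0 g0) at this
      omega
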